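/- arXiv:1906.06733 — 4 statements merged into one kernel-verified Lean document; each statement's English description precedes it below -/
import Mathlib

section
/- Let τ be a finite group whose order is divisible by p. Then: (i) A_τ is reduced; (ii) A_τ is a finitely generated k-algebra; (iii) A_τ is a graded subalgebra of ∏_{E ∈ E(τ)} S•(J_E*), i.e. for any element (f_E) of A_τ and any n ≥ 0 the family of degree-n homogeneous components of the f_E again lies in A_τ; and (iv) if E_1, …, E_s are the maximal elements of the poset E(τ), then the projection A_τ → ∏_{i=1}^s S•(J_{E_i}*) onto the components indexed by the maximal elementary abelian p-subgroups is an injective k-algebra homomorphism. -/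
/-!
Statement 0.  `k` is a field of characteristic `p > 0`, `τ` a finite group of order
divisible by `p`.  `A_τ` is the inverse limit of the symmetric algebras `S^•(J_E^*)`
over the poset `𝓔(τ)` of elementary abelian `p`-subgroups `E ⊆ τ`.  Here `S^•(J_E^*)`
is modelled as the polynomial algebra on the basis `{(g-e)^∨ : e ≠ g ∈ E}` of `J_E^*`
dual to the canonical basis `{g - e : e ≠ g ∈ E}` of the augmentation ideal `J_E ⊆ kE`;
the restriction map `S^•(J_E^*) → S^•(J_{E'}^*)` (dual to the inclusion `J_{E'} ⊆ J_E`)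
sends `(g-e)^∨` to `(g-e)^∨` if `g ∈ E'` and to `0` otherwise.

Claims: (i) `A_τ` is reduced; (ii) `A_τ` is a finitely generated `k`-algebra;
(iii) `A_τ` is a graded subalgebra of `∏_E S^•(J_E^*)`; (iv) the projection of `A_τ`
onto the components indexed by the maximal elementary abelian `p`-subgroups is an
injective `k`-algebra homomorphism.
-/

open MvPolynomial TensorProduct

set_option synthInstance.maxHeartbeats 1000000
set_option maxHeartbeats 1600000
set_option linter.unusedSectionVars false

attribute [local instance] Classical.propDecidable

noncomputable section

/-- A subgroup `E` of `τ` is an *elementary abelian `p`-subgroup* if it is commutative and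
every element has order dividing `p`. -/
def IsElemAb {τ : Type} [Group τ] (p : ℕ) (E : Subgroup τ) : Prop :=
  (∀ g ∈ E, g ^ p = 1) ∧ ∀ g ∈ E, ∀ h ∈ E, g * h = h * g

/-- The poset `𝓔(τ)` of elementary abelian `p`-subgroups of `τ`, ordered by inclusion. -/
abbrev ElemAb (τ : Type) [Group τ] (p : ℕ) := {E : Subgroup τ // IsElemAb p E}

variable (k : Type) [Field k] (τ : Type) [Group τ] [Fintype τ] (p : ℕ)

/-- The index set `{g ∈ E : g ≠ 1}` of the canonical basis `{g - e}` of `J_E`. -/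
def Idx (E : ElemAb τ p) : Type := {g : τ // g ∈ E.1 ∧ g ≠ 1}

/-- The model for the symmetric algebra `S^•(J_E^*)`. -/
abbrev SJ (E : ElemAb τ p) := MvPolynomial (Idx τ p E) k

/-- The restriction map `S^•(J_E^*) → S^•(J_{E'}^*)` induced by the surjection
`J_E^* → J_{E'}^*` dual to the inclusion `J_{E'} ⊆ J_E`. -/
def res {E' E : ElemAb τ p} (_ : E' ≤ E) : SJ k τ p E →ₐ[k] SJ k τ p E' :=
  aeval fun g => if hg : g.1 ∈ E'.1 then X ⟨g.1, hg, g.2.2⟩ else 0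

/-- `A_τ`: the subalgebra of `∏_{E ∈ 𝓔(τ)} S^•(J_E^*)` of families compatible with all
restriction maps. -/
def Atau : Subalgebra k (∀ E : ElemAb τ p, SJ k τ p E) where
  carrier := {f | ∀ (E' E : ElemAb τ p) (h : E' ≤ E), res k τ p h (f E) = f E'}
  mul_mem' := fun ha hb E' E h => by
    simp only [Pi.mul_apply, map_mul]; rw [ha E' E h, hb E' E h]
  add_mem' := fun ha hb E' E h => by
    simp only [Pi.add_apply, map_add]; rw [ha E' E h, hb E' E h]
  algebraMap_mem' := fun r E' E h => by
    simp only [Pi.algebraMap_apply]; exact (res k τ p h).commutes r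

/-- The projection of `A_τ` onto the components indexed by the maximal elementary
abelian `p`-subgroups. -/
def projMax : ↥(Atau k τ p) →ₐ[k] (∀ E : {E : ElemAb τ p // IsMax E}, SJ k τ p E.1) :=
  Pi.algHom k _ fun E => (Pi.evalAlgHom k _ E.1).comp (Atau k τ p).val


/-! ### Auxiliary material for the proof -/

/-- The global variable set: all nonidentity elements of `τ`. -/
def Var := {g : τ // g ≠ 1}

instance : Finite (Var τ) := by unfold Var; infer_instance

instance : Finite (Subgroup τ) :=
  Finite.of_injective (fun H : Subgroup τ => (H : Set τ)) SetLike.coe_injective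

/-- The generators of `A_τ`: one for each nonidentity element of `τ`. -/
def xi (g : Var τ) : ∀ E : ElemAb τ p, SJ k τ p E := fun E =>
  if h : g.1 ∈ E.1 then X ⟨g.1, h, g.2⟩ else 0

/-- "Kill" all variables outside `E` in the global polynomial ring. -/
def kill (E : ElemAb τ p) : MvPolynomial (Var τ) k →ₐ[k] MvPolynomial (Var τ) k :=
  aeval fun g => if g.1 ∈ E.1 then X g else 0

/-- The embedding `S^•(J_E^*) → k[X_g : g ∈ τ, g ≠ 1]`. -/
def up (E : ElemAb τ p) : SJ k τ p E →ₐ[k] MvPolynomial (Var τ) k :=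
  rename fun i => ⟨i.1, i.2.2⟩

lemma up_injective (E : ElemAb τ p) : Function.Injective (up k τ p E) :=
  rename_injective _ fun a b h => Subtype.ext (congrArg (Subtype.val : Var τ → τ) h)

lemma mem_Atau_iff (f : ∀ E : ElemAb τ p, SJ k τ p E) :
    f ∈ Atau k τ p ↔ ∀ (E' E : ElemAb τ p) (h : E' ≤ E), res k τ p h (f E) = f E' :=
  Iff.rfl

lemma up_res {E' E : ElemAb τ p} (h : E' ≤ E) (q : SJ k τ p E) :
    up k τ p E' (res k τ p h q) = kill k τ p E' (up k τ p E q) := by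
  have hcomp : (up k τ p E').comp (res k τ p h) = (kill k τ p E').comp (up k τ p E) := by
    apply MvPolynomial.algHom_ext
    intro i
    simp only [AlgHom.comp_apply, res, aeval_X, up, rename_X, kill]
    split_ifs with h1
    · erw [rename_X, rename_X, aeval_X, if_pos h1]
    · erw [map_zero, rename_X, aeval_X, if_neg h1]
  exact DFunLike.congr_fun hcomp q

lemma xi_mem (g : Var τ) : xi k τ p g ∈ Atau k τ p := by
  intro E' E h
  simp only [xi]
  by_cases h1 : g.1 ∈ E'.1
  · rw [dif_pos (h h1), dif_pos h1, res]; erw [aeval_X, dif_pos h1]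
  · rw [dif_neg h1]
    by_cases h2 : g.1 ∈ E.1
    · rw [dif_pos h2, res]; erw [aeval_X, dif_neg h1]
    · rw [dif_neg h2, map_zero]

lemma kill_monomial (E : ElemAb τ p) (d : Var τ →₀ ℕ) (c : k) :
    kill k τ p E (monomial d c) =
      if ∀ g ∈ d.support, g.1 ∈ E.1 then monomial d c else 0 := by
  rw [kill, aeval_monomial]
  split_ifs with h
  · rw [monomial_eq, ← algebraMap_eq]
    congr 1
    exact Finsupp.prod_congr fun g hg => by rw [if_pos (h g hg)]
  · push_neg at h
    obtain ⟨g, hg, hgE⟩ := h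
    rw [Finsupp.prod, Finset.prod_eq_zero hg, mul_zero]
    rw [if_neg hgE, zero_pow (Finsupp.mem_support_iff.mp hg)]

lemma coeff_kill (E : ElemAb τ p) (q : MvPolynomial (Var τ) k) (d : Var τ →₀ ℕ) :
    coeff d (kill k τ p E q) = if ∀ g ∈ d.support, g.1 ∈ E.1 then coeff d q else 0 := by
  conv_lhs => rw [q.as_sum, map_sum]
  rw [coeff_sum]
  have hterm : ∀ d' ∈ q.support,
      coeff d (kill k τ p E (monomial d' (coeff d' q))) =
        if d = d' then (if ∀ g ∈ d.support, g.1 ∈ E.1 then coeff d q else 0) else 0 := by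
    intro d' _
    rw [kill_monomial]
    by_cases hd : d = d'
    · subst hd
      split_ifs <;> simp_all [coeff_monomial]
    · split_ifs <;> simp_all [coeff_monomial, Ne.symm hd]
  rw [Finset.sum_congr rfl hterm, Finset.sum_ite_eq]
  split_ifs with h1 h2
  · rfl
  · rfl
  · exact (MvPolynomial.notMem_support_iff.mp h1).symm
  · rfl

lemma aeval_xi_component (E : ElemAb τ p) (P : MvPolynomial (Var τ) k) :
    up k τ p E (MvPolynomial.aeval (xi k τ p) P E) = kill k τ p E P := by
  have hcomp : (up k τ p E).comp ((Pi.evalAlgHom k _ E).comp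
      (MvPolynomial.aeval (xi k τ p))) = kill k τ p E := by
    apply MvPolynomial.algHom_ext
    intro g
    simp only [AlgHom.comp_apply, aeval_X, Pi.evalAlgHom_apply, xi, kill, up]
    split_ifs with h1
    · erw [rename_X]
      exact congrArg X (Subtype.ext rfl)
    · rw [map_zero]
  exact DFunLike.congr_fun hcomp P

lemma mem_adjoin_of_mem_Atau (f : ∀ E : ElemAb τ p, SJ k τ p E) (hf : f ∈ Atau k τ p) :
    f ∈ Algebra.adjoin k (Set.range (xi k τ p)) := by
  haveI : Fintype (ElemAb τ p) := Fintype.ofFinite _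
  set F : ElemAb τ p → MvPolynomial (Var τ) k := fun E => up k τ p E (f E) with hF
  have ha : ∀ E, kill k τ p E (F E) = F E := fun E => by
    rw [← up_res k τ p (le_refl E), hf E E (le_refl E)]
  have hb : ∀ {E' E : ElemAb τ p} (h : E' ≤ E), F E' = kill k τ p E' (F E) :=
    fun {E' E} h => by rw [← up_res k τ p h, hf E' E h]
  set D : Finset (Var τ →₀ ℕ) := Finset.univ.biUnion (fun E => (F E).support) with hD
  set Cl : (Var τ →₀ ℕ) → Subgroup τ :=
    fun d => Subgroup.closure (Subtype.val '' (d.support : Set (Var τ))) with hCldef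
  have hCl_le : ∀ (d) (E : ElemAb τ p), (∀ g ∈ d.support, g.1 ∈ E.1) → Cl d ≤ E.1 :=
    fun d E h => (Subgroup.closure_le _).2 (by rintro x ⟨g, hg, rfl⟩; exact h g hg)
  have hCl_elem : ∀ (d) (E : ElemAb τ p), (∀ g ∈ d.support, g.1 ∈ E.1) → IsElemAb p (Cl d) :=
    fun d E h => ⟨fun g hg => E.2.1 g (hCl_le d E h hg),
      fun g hg g' hg' => E.2.2 g (hCl_le d E h hg) g' (hCl_le d E h hg')⟩
  set c : (Var τ →₀ ℕ) → k := fun d =>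
    if h : IsElemAb p (Cl d) then coeff d (F ⟨Cl d, h⟩) else 0 with hcdef
  have hc : ∀ (d) (E : ElemAb τ p), (∀ g ∈ d.support, g.1 ∈ E.1) → c d = coeff d (F E) := by
    intro d E h
    have h1 := hCl_elem d E h
    have h2 : (⟨Cl d, h1⟩ : ElemAb τ p) ≤ E := hCl_le d E h
    have h3 : c d = coeff d (F ⟨Cl d, h1⟩) := dif_pos h1
    rw [h3, hb h2, coeff_kill, if_pos]
    intro g hg
    exact Subgroup.subset_closure ⟨g, hg, rfl⟩
  set P : MvPolynomial (Var τ) k := ∑ d ∈ D, monomial d (c d) with hP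
  have hsupp : ∀ E, (F E).support ⊆ D := fun E d hd =>
    Finset.mem_biUnion.2 ⟨E, Finset.mem_univ _, hd⟩
  have hFsum : ∀ E, F E = ∑ d ∈ D, monomial d (coeff d (F E)) := by
    intro E
    conv_lhs => rw [(F E).as_sum]
    exact Finset.sum_subset (hsupp E) fun d _ hd => by
      rw [MvPolynomial.notMem_support_iff.mp hd, monomial_zero]
  have hkill : ∀ E, kill k τ p E P = F E := by
    intro E
    rw [hP, map_sum, hFsum E]
    refine Finset.sum_congr rfl fun d _ => ?_
    rw [kill_monomial]
    by_cases h : ∀ g ∈ d.support, g.1 ∈ E.1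
    · rw [if_pos h, hc d E h]
    · rw [if_neg h]
      have h0 : coeff d (F E) = 0 := by
        have h1 := congrArg (MvPolynomial.coeff d) (ha E)
        rw [coeff_kill, if_neg h] at h1; exact h1.symm
      rw [h0, monomial_zero]
  have hfP : f = MvPolynomial.aeval (xi k τ p) P := by
    funext E
    apply up_injective k τ p E
    rw [aeval_xi_component, hkill E]
  rw [hfP, Algebra.adjoin_range_eq_range_aeval]
  exact ⟨P, rfl⟩

lemma adjoin_xi_eq : Algebra.adjoin k (Set.range (xi k τ p)) = Atau k τ p := by
  apply le_antisymm
  · rw [Algebra.adjoin_le_iff]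
    rintro _ ⟨g, rfl⟩
    exact xi_mem k τ p g
  · exact fun f hf => mem_adjoin_of_mem_Atau k τ p f hf

lemma res_isHomogeneous {E' E : ElemAb τ p} (h : E' ≤ E) {q : SJ k τ p E} {n : ℕ}
    (hq : q.IsHomogeneous n) : (res k τ p h q).IsHomogeneous n := by
  have h2 : (MvPolynomial.aeval (fun g : Idx τ p E =>
      if hg : g.1 ∈ E'.1 then (X ⟨g.1, hg, g.2.2⟩ : SJ k τ p E') else 0) q).IsHomogeneous
      (1 * n) := by
    refine hq.aeval _ fun i => ?_
    split_ifs with h'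
    · exact isHomogeneous_X _ _
    · exact isHomogeneous_zero _ _ _
  rw [one_mul] at h2
  exact h2

lemma res_homogeneousComponent {E' E : ElemAb τ p} (h : E' ≤ E) (q : SJ k τ p E) (n : ℕ) :
    res k τ p h (homogeneousComponent n q) = homogeneousComponent n (res k τ p h q) := by
  conv_rhs => rw [← sum_homogeneousComponent q]
  rw [map_sum, map_sum]
  rw [Finset.sum_congr rfl fun m _ => homogeneousComponent_of_mem
    ((mem_homogeneousSubmodule _ _).2
      (res_isHomogeneous k τ p h (homogeneousComponent_isHomogeneous m q)))]
  rw [Finset.sum_ite_eq]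
  split_ifs with hn
  · rfl
  · rw [homogeneousComponent_eq_zero, map_zero]
    simpa using hn

theorem geometric_invariants_stmt0 {p : ℕ} [Fact p.Prime]
    (k : Type) [Field k] [CharP k p]
    (τ : Type) [Group τ] [Fintype τ] (hdvd : p ∣ Fintype.card τ) :
    -- (i) `A_τ` is reduced
    IsReduced ↥(Atau k τ p) ∧
    -- (ii) `A_τ` is a finitely generated `k`-algebra
    (Atau k τ p).FG ∧
    -- (iii) `A_τ` is a graded subalgebra of `∏_E S^•(J_E^*)`: taking degree-`n`
    -- homogeneous components componentwise preserves membership in `A_τ`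
    (∀ f ∈ Atau k τ p, ∀ n : ℕ,
      (fun E : ElemAb τ p => homogeneousComponent n (f E)) ∈ Atau k τ p) ∧
    -- (iv) the projection onto the maximal components is injective (it is a `k`-algebra
    -- homomorphism by construction)
    Function.Injective (projMax k τ p) := by
  refine ⟨?_, ?_, ?_, ?_⟩
  · -- (i) reduced
    haveI : IsReduced (∀ E : ElemAb τ p, SJ k τ p E) := by
      constructor
      intro x hx
      funext E
      exact (hx.map (Pi.evalRingHom _ E)).eq_zero
    exact isReduced_of_injective (Atau k τ p).val Subtype.coe_injective
  · -- (ii) finitely generated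
    haveI : Fintype (Var τ) := Fintype.ofFinite _
    refine ⟨Finset.univ.image (xi k τ p), ?_⟩
    rw [Finset.coe_image, Finset.coe_univ, Set.image_univ]
    exact adjoin_xi_eq k τ p
  · -- (iii) graded
    intro f hf n E' E h
    rw [res_homogeneousComponent, hf E' E h]
  · -- (iv) injective on maximal components
    rw [injective_iff_map_eq_zero]
    intro f hf0
    apply Subtype.ext
    funext E
    have hmax : ∀ (M : ElemAb τ p), IsMax M → f.1 M = 0 := by
      intro M hM
      exact congrFun hf0 ⟨M, hM⟩
    obtain ⟨M, hEM, hMmax⟩ :=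
      Finite.exists_le_maximal (p := fun _ : ElemAb τ p => True) (a := E) trivial
    have hM : IsMax M := fun c hc => hMmax.2 trivial hc
    have := f.2 E M hEM
    rw [hmax M hM, map_zero] at this
    exact this.symm
end
end

section
/- Let V be a finite-dimensional vector space over a field k with basis B, and let {B_i}_{i ∈ I} be a finite family of subsets of B that is closed under pairwise intersection (if B_i and B_j belong to the family then so does B_i ∩ B_j); set V_i := span(B_i). Then the restriction maps S•(V*) → S•(V_i*) are jointly surjective onto compatible families: for every family (f_i)_{i∈I} with f_i ∈ S•(V_i*) such that whenever V_j ⊆ V_i the restriction map S•(V_i*) → S•(V_j*) sends f_i to f_j, there exists F ∈ S•(V*) whose restriction to S•(V_i*) equals f_i for every i ∈ I. -/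
/-!
Statement 2 (coordinate-subspace form of Proposition 2.2(3)).  `V` is a finite
dimensional `k`-vector space with basis `B` (modelled by its index set `ι`), and
`{B_i}_{i ∈ I}` is a finite family of subsets of `B`, closed under pairwise
intersection; `V_i = span B_i`.  The symmetric algebra `S^•(V^*)` is modelled as the
polynomial algebra `k[X_b : b ∈ B]` on the dual basis, and likewise
`S^•(V_i^*) = k[X_b : b ∈ B_i]`; the restriction map `S^•(V^*) → S^•(V_i^*)`
(dual to the inclusion `V_i ⊆ V`) sends `X_b` to `X_b` if `b ∈ B_i` and to `0`
otherwise, and similarly for `V_j ⊆ V_i` (which for spans of subsets of a basis is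
equivalent to `B_j ⊆ B_i`).

Claim: every family `(f_i)` compatible with the restriction maps is the common
restriction of a single `F ∈ S^•(V^*)`.
-/

open MvPolynomial

attribute [local instance] Classical.propDecidable

noncomputable section

variable (k : Type) [Field k] (ι : Type)

/-- Restriction `S^•(V^*) → S^•(V_t^*)` for a coordinate subspace `V_t = span {b ∈ t}`. -/
def resTotal (t : Set ι) : MvPolynomial ι k →ₐ[k] MvPolynomial t k :=
  aeval fun b => if hb : b ∈ t then X (⟨b, hb⟩ : t) else 0

/-- Restriction `S^•(V_t^*) → S^•(V_{t'}^*)` for nested coordinate subspaces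
`V_{t'} ⊆ V_t`. -/
def resSub {t' t : Set ι} (_ : t' ⊆ t) : MvPolynomial t k →ₐ[k] MvPolynomial t' k :=
  aeval fun b => if hb : b.1 ∈ t' then X (⟨b.1, hb⟩ : t') else 0

/-- `trunc t` kills all monomials involving a variable outside `t`. -/
def trunc (t : Set ι) : MvPolynomial ι k →ₐ[k] MvPolynomial ι k :=
  (rename (Subtype.val : t → ι)).comp (resTotal k ι t)

lemma trunc_X (t : Set ι) (b : ι) :
    trunc k ι t (X b) = if b ∈ t then X b else 0 := by
  simp only [trunc, resTotal, AlgHom.comp_apply, aeval_X]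
  split_ifs with h <;> simp

lemma trunc_trunc (t t' : Set ι) (p : MvPolynomial ι k) :
    trunc k ι t' (trunc k ι t p) = trunc k ι (t' ∩ t) p := by
  have : (trunc k ι t').comp (trunc k ι t) = trunc k ι (t' ∩ t) := by
    apply MvPolynomial.algHom_ext
    intro b
    simp only [AlgHom.comp_apply, trunc_X]
    by_cases hb : b ∈ t <;> by_cases hb' : b ∈ t' <;>
      simp [hb, hb', trunc_X, Set.mem_inter_iff]
  exact AlgHom.congr_fun this p

lemma rename_resSub {t' t : Set ι} (h : t' ⊆ t) (p : MvPolynomial t k) :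
    rename (Subtype.val : t' → ι) (resSub k ι h p) =
      trunc k ι t' (rename (Subtype.val : t → ι) p) := by
  have : (rename (Subtype.val : t' → ι)).comp (resSub k ι h) =
      (trunc k ι t').comp (rename (Subtype.val : t → ι)) := by
    apply MvPolynomial.algHom_ext
    intro b
    simp only [AlgHom.comp_apply, resSub, aeval_X, rename_X, trunc_X]
    split_ifs with hb <;> simp
  exact AlgHom.congr_fun this p

theorem geometric_invariants_stmt2
    (k : Type) [Field k] (ι : Type) [Fintype ι]
    (I : Type) [Fintype I] (s : I → Set ι)
    (hinter : ∀ i j : I, ∃ l : I, s l = s i ∩ s j)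
    (f : ∀ i : I, MvPolynomial (s i) k)
    (hcompat : ∀ (i j : I) (h : s j ⊆ s i), resSub k ι h (f i) = f j) :
    ∃ F : MvPolynomial ι k, ∀ i : I, resTotal k ι (s i) F = f i := by
  set G : I → MvPolynomial ι k := fun i => rename (Subtype.val : s i → ι) (f i) with hGdef
  have hG : ∀ (i j : I) (h : s j ⊆ s i), trunc k ι (s j) (G i) = G j := by
    intro i j h
    rw [hGdef, ← rename_resSub k ι h (f i), hcompat i j h]
  have key : ∀ A : Finset I, ∃ F : MvPolynomial ι k,
      ∀ i ∈ A, trunc k ι (s i) F = G i := by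
    intro A
    induction A using Finset.induction_on with
    | empty => exact ⟨0, by simp⟩
    | @insert i A hni ih =>
      obtain ⟨F, hF⟩ := ih
      refine ⟨F + G i - trunc k ι (s i) F, ?_⟩
      intro j hj
      rcases Finset.mem_insert.mp hj with rfl | hj
      · rw [map_sub, map_add, trunc_trunc, Set.inter_self,
          hG j j subset_rfl]
        ring
      · obtain ⟨l, hl⟩ := hinter j i
        have hlj : s l ⊆ s j := hl ▸ Set.inter_subset_left
        have hli : s l ⊆ s i := hl ▸ Set.inter_subset_right
        have h1 : trunc k ι (s j) (G i) = G l := by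
          calc trunc k ι (s j) (G i)
              = trunc k ι (s j) (trunc k ι (s i) (G i)) := by
                rw [hG i i subset_rfl]
            _ = trunc k ι (s j ∩ s i) (G i) := trunc_trunc k ι _ _ _
            _ = trunc k ι (s l) (G i) := by rw [hl]
            _ = G l := hG i l hli
        have h2 : trunc k ι (s l) F = G l := by
          calc trunc k ι (s l) F
              = trunc k ι (s l ∩ s j) F := by
                rw [Set.inter_eq_left.mpr hlj]
            _ = trunc k ι (s l) (trunc k ι (s j) F) := (trunc_trunc k ι _ _ _).symm
            _ = trunc k ι (s l) (G j) := by rw [hF j hj]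
            _ = G l := hG j l hlj
        rw [map_sub, map_add, hF j hj, h1, trunc_trunc, ← hl, h2]
        ring
  obtain ⟨F, hF⟩ := key Finset.univ
  refine ⟨F, fun i => ?_⟩
  have hinj := MvPolynomial.rename_injective (R := k)
    (Subtype.val : s i → ι) Subtype.val_injective
  apply hinj
  exact hF i (Finset.mem_univ i)
end
end

section
/- Let τ be a finite group and M a kτ-module. Then Θ_{τ,M} is τ-equivariant: for all x ∈ τ and all v ∈ A_τ ⊗_k M one has Θ_{τ,M}(x·v) = x·Θ_{τ,M}(v). In other words, Θ_{τ,M} is an endomorphism of A_τ ⊗_k M which is simultaneously A_τ-linear and commutes with the diagonal τ-action. -/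
open MvPolynomial TensorProduct

set_option synthInstance.maxHeartbeats 1000000
set_option maxHeartbeats 1600000
set_option linter.unusedSectionVars false

attribute [local instance] Classical.propDecidable

noncomputable section

variable (k : Type) [Field k] (τ : Type) [Group τ] [Fintype τ] (p : ℕ)

/-- The family `(g - e)^∨ ∈ ∏_E S^•(J_E^*)`: its `E`-component is the dual basis
functional `(g-e)^∨` if `g ∈ E`, `g ≠ e`, and `0` otherwise. -/
def dualElt (g : τ) : ∀ E : ElemAb τ p, SJ k τ p E :=
  fun E => if h : g ∈ E.1 ∧ g ≠ 1 then X ⟨g, h⟩ else 0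

lemma dualElt_mem (g : τ) : dualElt k τ p g ∈ Atau k τ p := by
  intro E' E h
  by_cases hgE : g ∈ E.1 ∧ g ≠ 1
  · by_cases hgE' : g ∈ E'.1
    · simp only [dualElt, dif_pos hgE, dif_pos (And.intro hgE' hgE.2), res]
      erw [aeval_X]
      exact dif_pos hgE'
    · have : ¬ (g ∈ E'.1 ∧ g ≠ 1) := fun hc => hgE' hc.1
      simp only [dualElt, dif_pos hgE, dif_neg this, res]
      erw [aeval_X]
      exact dif_neg hgE'
  · have hgE' : ¬ (g ∈ E'.1 ∧ g ≠ 1) := by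
      intro hc; exact hgE ⟨h hc.1, hc.2⟩
    simp [dualElt, hgE, hgE']

/-- The coordinate ring `A_τ` as a type. -/
abbrev Rt := ↥(Atau k τ p)

/-- The conjugate `x⁻¹ E x` of an elementary abelian `p`-subgroup (realized as the
preimage of `E` under conjugation by `x`). -/
def conjE (x : τ) (E : ElemAb τ p) : ElemAb τ p :=
  ⟨E.1.comap (MulAut.conj x).toMonoidHom, by
    obtain ⟨h1, h2⟩ := E.2
    constructor
    · intro g hg
      rw [Subgroup.mem_comap] at hg
      have := h1 _ hg
      simp only [MulEquiv.coe_toMonoidHom, MulAut.conj_apply] at this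
      rw [conj_pow] at this
      have : g ^ p = x⁻¹ * (x * g ^ p * x⁻¹) * x := by group
      rw [‹x * _ * x⁻¹ = 1›] at this
      simpa using this
    · intro g hg h hh
      rw [Subgroup.mem_comap] at hg hh
      have := h2 _ hg _ hh
      simp only [MulEquiv.coe_toMonoidHom, MulAut.conj_apply] at this
      have h3 : x * (g * h) * x⁻¹ = x * (h * g) * x⁻¹ := by
        calc x * (g * h) * x⁻¹ = (x * g * x⁻¹) * (x * h * x⁻¹) := by group
        _ = (x * h * x⁻¹) * (x * g * x⁻¹) := this
        _ = x * (h * g) * x⁻¹ := by group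
      have := congrArg (fun z => x⁻¹ * z * x) h3
      simpa [mul_assoc] using this⟩

/-- Reindexing of variables along conjugation: `h ↦ x h x⁻¹`.  This realizes the dual of
the `k`-linear isomorphism `J_E → J_{x⁻¹Ex}`, `g - e ↦ x⁻¹gx - e`, on dual bases. -/
def conjIdx (x : τ) (E : ElemAb τ p) (h : Idx τ p (conjE τ p x E)) : Idx τ p E :=
  ⟨x * h.1 * x⁻¹, by
    have := Subgroup.mem_comap.mp h.2.1
    simpa using this, by
    intro hc
    apply h.2.2
    have : h.1 = x⁻¹ * (x * h.1 * x⁻¹) * x := by group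
    rw [hc] at this; simpa using this⟩

/-- The action of `x ∈ τ` on families: the `E`-component of `x · f` is the image of
`f_{x⁻¹Ex}` under the `k`-algebra isomorphism `S^•(J_{x⁻¹Ex}^*) → S^•(J_E^*)` dual to
the `k`-linear isomorphism `J_E → J_{x⁻¹Ex}`, `g - e ↦ x⁻¹gx - e`. -/
def actFun (x : τ) (f : ∀ E : ElemAb τ p, SJ k τ p E) : ∀ E : ElemAb τ p, SJ k τ p E :=
  fun E => rename (conjIdx τ p x E) (f (conjE τ p x E))

lemma actFun_mem (x : τ) (f : ∀ E : ElemAb τ p, SJ k τ p E) (hf : f ∈ Atau k τ p) :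
    actFun k τ p x f ∈ Atau k τ p := by
  intro E' E h
  have hle : conjE τ p x E' ≤ conjE τ p x E := by
    intro g hg
    exact Subgroup.mem_comap.mpr (h (Subgroup.mem_comap.mp hg))
  have key : (res k τ p h).comp (rename (conjIdx τ p x E) :
        SJ k τ p (conjE τ p x E) →ₐ[k] SJ k τ p E)
      = (rename (conjIdx τ p x E') :
          SJ k τ p (conjE τ p x E') →ₐ[k] SJ k τ p E').comp (res k τ p hle) := by
    apply MvPolynomial.algHom_ext
    intro u
    by_cases hc : x * u.1 * x⁻¹ ∈ E'.1
    · have hc' : u.1 ∈ (conjE τ p x E').1 := Subgroup.mem_comap.mpr (by simpa using hc)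
      have h2 : (conjIdx τ p x E u).1 ∈ E'.1 := hc
      simp only [AlgHom.coe_comp, Function.comp_apply, rename_X, res, aeval_X]
      rw [dif_pos h2, dif_pos hc']
      erw [rename_X]
      congr 1
    · have hc' : ¬ u.1 ∈ (conjE τ p x E').1 :=
        fun hm => hc (by simpa using Subgroup.mem_comap.mp hm)
      have h2 : ¬ (conjIdx τ p x E u).1 ∈ E'.1 := hc
      simp only [AlgHom.coe_comp, Function.comp_apply, rename_X, res, aeval_X]
      rw [dif_neg h2, dif_neg hc']
      simp
  have := AlgHom.congr_fun key (f (conjE τ p x E))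
  simpa [actFun, hf _ _ hle] using this

/-- The action of `x ∈ τ` on `A_τ` as a `k`-algebra homomorphism. -/
def actAlg (x : τ) : Rt k τ p →ₐ[k] Rt k τ p where
  toFun f := ⟨actFun k τ p x f.1, actFun_mem k τ p x f.1 f.2⟩
  map_one' := by
    apply Subtype.ext; funext E
    simp [actFun]
  map_mul' a b := by
    apply Subtype.ext; funext E
    simp [actFun, map_mul]
  map_zero' := by
    apply Subtype.ext; funext E
    simp [actFun]
  map_add' a b := by
    apply Subtype.ext; funext E
    simp [actFun, map_add]
  commutes' r := by
    apply Subtype.ext; funext E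
    simp [actFun, Algebra.algebraMap_eq_smul_one, Pi.smul_apply]

variable {M : Type} [AddCommGroup M] [Module k M]

/-- The universal operator `Θ_{τ,M}`: the `A_τ`-linear endomorphism of `A_τ ⊗_k M`
determined by `Θ_{τ,M}(1 ⊗ m) = ∑_{g ∈ τ, g^p = e, g ≠ e} (g-e)^∨ ⊗ (g·m - m)`. -/
def theta (ρ : Representation k τ M) :
    (Rt k τ p ⊗[k] M) →ₗ[Rt k τ p] (Rt k τ p ⊗[k] M) :=
  ∑ g ∈ Finset.univ.filter (fun g : τ => g ^ p = 1 ∧ g ≠ 1),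
    (⟨dualElt k τ p g, dualElt_mem k τ p g⟩ : Rt k τ p) •
      LinearMap.baseChange (Rt k τ p) (ρ g - LinearMap.id)

/-- The diagonal action of `x ∈ τ` on `A_τ ⊗_k M`. -/
def diag (ρ : Representation k τ M) (x : τ) :
    (Rt k τ p ⊗[k] M) →ₗ[k] (Rt k τ p ⊗[k] M) :=
  TensorProduct.map (actAlg k τ p x).toLinearMap (ρ x)

lemma mem_conjE_iff (x g : τ) (E : ElemAb τ p) :
    g ∈ (conjE τ p x E).1 ↔ x * g * x⁻¹ ∈ E.1 := by
  simp [conjE, Subgroup.mem_comap]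

lemma actAlg_dualElt (x g : τ) :
    actAlg k τ p x ⟨dualElt k τ p g, dualElt_mem k τ p g⟩
      = ⟨dualElt k τ p (x * g * x⁻¹), dualElt_mem k τ p (x * g * x⁻¹)⟩ := by
  apply Subtype.ext; funext E
  show rename (conjIdx τ p x E) (dualElt k τ p g (conjE τ p x E))
      = dualElt k τ p (x * g * x⁻¹) E
  simp only [dualElt]
  by_cases h : g ∈ (conjE τ p x E).1 ∧ g ≠ 1
  · have h' : x * g * x⁻¹ ∈ E.1 ∧ x * g * x⁻¹ ≠ 1 := by
      refine ⟨(mem_conjE_iff τ p x g E).mp h.1, ?_⟩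
      intro hc
      apply h.2
      have : g = x⁻¹ * (x * g * x⁻¹) * x := by group
      rw [hc] at this; simpa using this
    rw [dif_pos h, dif_pos h']
    erw [rename_X]
    rfl
  · have h' : ¬ (x * g * x⁻¹ ∈ E.1 ∧ x * g * x⁻¹ ≠ 1) := by
      intro hc
      apply h
      refine ⟨(mem_conjE_iff τ p x g E).mpr hc.1, ?_⟩
      intro hg; apply hc.2; rw [hg]; group
    rw [dif_neg h, dif_neg h', map_zero]

/-- `Θ_{τ,M}` commutes with the diagonal `τ`-action on `A_τ ⊗_k M`
(it is `A_τ`-linear by its very type), i.e. it is an endomorphism of `A_τ ⊗_k M`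
as an `A_τ#kτ`-module. -/
theorem geometric_invariants_stmt5 {p : ℕ} [Fact p.Prime]
    (k : Type) [Field k] [CharP k p]
    (τ : Type) [Group τ] [Fintype τ]
    (M : Type) [AddCommGroup M] [Module k M] (ρ : Representation k τ M)
    (x : τ) (v : Rt k τ p ⊗[k] M) :
    theta k τ p ρ (diag k τ p ρ x v) = diag k τ p ρ x (theta k τ p ρ v) := by
  induction v using TensorProduct.induction_on with
  | zero => simp
  | add a b ha hb => simp only [map_add, ha, hb]
  | tmul f m =>
    have hdiag : ∀ (g : Rt k τ p) (n : M),
        diag k τ p ρ x (g ⊗ₜ[k] n) = (actAlg k τ p x g) ⊗ₜ[k] (ρ x n) := fun _ _ => rfl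
    have htheta : ∀ (g : Rt k τ p) (n : M), theta k τ p ρ (g ⊗ₜ[k] n)
        = ∑ c ∈ Finset.univ.filter (fun c : τ => c ^ p = 1 ∧ c ≠ 1),
            ((⟨dualElt k τ p c, dualElt_mem k τ p c⟩ : Rt k τ p) * g) ⊗ₜ[k] (ρ c n - n) := by
      intro g n
      simp only [theta, LinearMap.sum_apply, LinearMap.smul_apply, LinearMap.baseChange_tmul,
        TensorProduct.smul_tmul', smul_eq_mul, LinearMap.sub_apply, LinearMap.id_apply]
    rw [hdiag, htheta, htheta, map_sum]
    refine Finset.sum_nbij' (fun c => x⁻¹ * c * x) (fun c => x * c * x⁻¹) ?_ ?_ ?_ ?_ ?_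
    · intro c hc
      simp only [Finset.mem_filter, Finset.mem_univ, true_and] at hc ⊢
      refine ⟨by
        have hr : x⁻¹ * c * x = x⁻¹ * c * (x⁻¹)⁻¹ := by group
        rw [hr, conj_pow, hc.1, mul_one]; group, ?_⟩
      intro h
      apply hc.2
      have : c = x * (x⁻¹ * c * x) * x⁻¹ := by group
      rw [h] at this; simpa using this
    · intro c hc
      simp only [Finset.mem_filter, Finset.mem_univ, true_and] at hc ⊢
      refine ⟨by rw [conj_pow, hc.1, mul_one, mul_inv_cancel], ?_⟩
      intro h
      apply hc.2
      have : c = x⁻¹ * (x * c * x⁻¹) * x := by group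
      rw [h] at this; simpa using this
    · intro c _; group
    · intro c _; group
    · intro c _
      rw [hdiag, map_mul, actAlg_dualElt]
      have hc : x * (x⁻¹ * c * x) * x⁻¹ = c := by group
      rw [hc, map_sub]
      congr 1
      have key : ∀ (a b : τ) (n : M), ρ a (ρ b n) = ρ (a * b) n := fun a b n => by
        rw [map_mul]; rfl
      rw [key c x m, key x (x⁻¹ * c * x) m]
      congr 2
      group
end
end

section
/- Let E be a finite elementary abelian p-group. Then the element Θ_E := Σ_{g ∈ E, g ≠ e} (g − e)^∨ ⊗ (g − e) of the k-algebra S•(J_E*) ⊗_k kE satisfies (Θ_E)^p = 0. -/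
/-!
Statement 8.  For a finite elementary abelian `p`-group `E`, the element
`Θ_E = ∑_{e ≠ g ∈ E} (g-e)^∨ ⊗ (g-e)` of `S^•(J_E^*) ⊗_k kE` satisfies `Θ_E^p = 0`.
Here `S^•(J_E^*)` is modelled as the polynomial algebra on the basis
`{(g-e)^∨ : e ≠ g ∈ E}` of `J_E^*` dual to the canonical basis `{g - e : e ≠ g ∈ E}`
of the augmentation ideal `J_E ⊆ kE`, so `(g-e)^∨` is the variable `X g`.
-/

open MvPolynomial TensorProduct

attribute [local instance] Classical.propDecidable

noncomputable section

set_option synthInstance.maxHeartbeats 400000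
set_option maxHeartbeats 800000

/-- The universal operator `Θ_E = ∑_{e ≠ g ∈ E} (g-e)^∨ ⊗ (g-e)` in
`S^•(J_E^*) ⊗_k kE`. -/
def thetaE (k : Type) [Field k] (E : Type) [CommGroup E] [Fintype E] :
    MvPolynomial {g : E // g ≠ 1} k ⊗[k] MonoidAlgebra k E :=
  ∑ g : {g : E // g ≠ 1},
    (X g : MvPolynomial {g : E // g ≠ 1} k) ⊗ₜ[k] (MonoidAlgebra.of k E g.1 - 1)

theorem geometric_invariants_stmt8 {p : ℕ} [Fact p.Prime]
    (k : Type) [Field k] [CharP k p]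
    (E : Type) [CommGroup E] [Fintype E] (hE : ∀ g : E, g ^ p = 1) :
    thetaE k E ^ p = 0 := by
  have hA : CharP (MonoidAlgebra k E) p :=
    charP_of_injective_algebraMap' (A := MonoidAlgebra k E) k p
  have hT : CharP (MvPolynomial {g : E // g ≠ 1} k ⊗[k] MonoidAlgebra k E) p :=
    charP_of_injective_algebraMap' k p
  rw [thetaE, sum_pow_char]
  refine Finset.sum_eq_zero fun g _ => ?_
  rw [Algebra.TensorProduct.tmul_pow, sub_pow_char, ← map_pow, hE, one_pow, map_one, sub_self,
    TensorProduct.tmul_zero]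
end
end
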